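/- The maximally mixed state ρ_m = I/n_s on an n_s-dimensional Hilbert space is the unique minimizer of ρ₂ ↦ max over density matrices ρ₁ of ‖ρ₁ − ρ₂‖²_HS, and the min-max value equals (n_s − 1)/n_s. Moreover, for any density matrix ρ₂, max over density matrices ρ₁ of ‖ρ₂ − ρ₁‖²_HS = ‖ρ₂‖²_HS + 1 − 2ζ_min(ρ₂), where ζ_min(ρ₂) is the smallest eigenvalue of ρ₂. -/

import Mathlib

open Matrix Kronecker
open scoped ComplexOrder

/-- Hilbert–Schmidt (Frobenius) norm of a complex square matrix. -/
noncomputable def hsNorm {k : Type*} [Fintype k] (M : Matrix k k ℂ) : ℝ :=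
  Real.sqrt (Matrix.trace (Mᴴ * M)).re

/-- The positive-semidefinite square root, as defined in the older Mathlib (since removed). -/
noncomputable def Matrix.PosSemidef.sqrt {n 𝕜 : Type*} [Fintype n] [DecidableEq n] [RCLike 𝕜]
    {A : Matrix n n 𝕜} (hA : A.PosSemidef) : Matrix n n 𝕜 :=
  (hA.1.eigenvectorUnitary : Matrix n n 𝕜) *
    diagonal (fun i => ((Real.sqrt (hA.1.eigenvalues i) : ℝ) : 𝕜)) *
    (star hA.1.eigenvectorUnitary : Matrix n n 𝕜)

/-- Trace norm: trace of the positive-semidefinite square root of `Mᴴ * M`. -/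
noncomputable def traceNorm {k : Type*} [Fintype k] [DecidableEq k] (M : Matrix k k ℂ) : ℝ :=
  (Matrix.trace (Matrix.posSemidef_conjTranspose_mul_self M).sqrt).re

/-- Induced two-norm: the largest singular value of `M`. -/
noncomputable def twoNorm {k : Type*} [Fintype k] [DecidableEq k] (M : Matrix k k ℂ) : ℝ :=
  ⨆ i, Real.sqrt
    ((Matrix.PosSemidef.isHermitian
      (Matrix.posSemidef_conjTranspose_mul_self M)).eigenvalues i)

/-- Partial trace over the environment factor `e`. -/
noncomputable def ptraceE {s e : Type*} [Fintype s] [Fintype e]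
    (M : Matrix (s × e) (s × e) ℂ) : Matrix s s ℂ :=
  Matrix.of fun i j => ∑ ν : e, M (i, ν) (j, ν)

/-- Partial trace over the system factor `s`. -/
noncomputable def ptraceS {s e : Type*} [Fintype s] [Fintype e]
    (M : Matrix (s × e) (s × e) ℂ) : Matrix e e ℂ :=
  Matrix.of fun μ ν => ∑ i : s, M (i, μ) (i, ν)

/-- A density matrix: positive semidefinite with unit trace. -/
def IsDensity {k : Type*} [Fintype k] (ρ : Matrix k k ℂ) : Prop :=
  ρ.PosSemidef ∧ Matrix.trace ρ = 1

set_option linter.unusedSectionVars false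
section Helpers
variable {k : Type*} [Fintype k] [DecidableEq k]

/-- diag entries of PSD have nonneg real part -/
lemma psd_diag_re_nonneg {M : Matrix k k ℂ} (hM : M.PosSemidef) (i : k) : 0 ≤ (M i i).re := by
  have h := hM.dotProduct_mulVec_nonneg (Pi.single i 1)
  have : star (Pi.single i 1 : k → ℂ) ⬝ᵥ (M *ᵥ Pi.single i 1) = M i i := by
    simp [dotProduct, mulVec, Pi.single_apply]
  rw [this] at h
  exact (Complex.le_def.mp h).1

lemma psd_trace_re_nonneg {M : Matrix k k ℂ} (hM : M.PosSemidef) : 0 ≤ (Matrix.trace M).re := by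
  rw [Matrix.trace, Complex.re_sum]
  exact Finset.sum_nonneg fun i _ => psd_diag_re_nonneg hM i

lemma psd_sqrt_mul_self' {A : Matrix k k ℂ} (hA : A.PosSemidef) : hA.sqrt * hA.sqrt = A := by
  have hU : (star (hA.1.eigenvectorUnitary : Matrix k k ℂ)) * hA.1.eigenvectorUnitary = 1 :=
    Matrix.mem_unitaryGroup_iff'.mp hA.1.eigenvectorUnitary.2
  conv_rhs => rw [hA.1.spectral_theorem, Unitary.conjStarAlgAut_apply]
  rw [Matrix.PosSemidef.sqrt]
  set U : Matrix k k ℂ := (hA.1.eigenvectorUnitary : Matrix k k ℂ)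
  calc _ = U * (diagonal (fun i => ((Real.sqrt (hA.1.eigenvalues i) : ℝ) : ℂ)) * (star U * U) *
        diagonal (fun i => ((Real.sqrt (hA.1.eigenvalues i) : ℝ) : ℂ))) * star U := by
          simp only [mul_assoc]; rfl
    _ = _ := by
      rw [hU, mul_one, diagonal_mul_diagonal]
      have hf : (fun i => ((Real.sqrt (hA.1.eigenvalues i) : ℝ) : ℂ) *
          ((Real.sqrt (hA.1.eigenvalues i) : ℝ) : ℂ)) = RCLike.ofReal ∘ hA.1.eigenvalues := by
        funext i
        rw [← Complex.ofReal_mul, Real.mul_self_sqrt (hA.eigenvalues_nonneg i)]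
        rfl
      rw [hf]

lemma psd_sqrt_herm' {A : Matrix k k ℂ} (hA : A.PosSemidef) : (hA.sqrt)ᴴ = hA.sqrt := by
  simp [Matrix.PosSemidef.sqrt, Matrix.conjTranspose_mul, Matrix.star_eq_conjTranspose, mul_assoc]
  rw [show (star fun i => ((Real.sqrt (hA.1.eigenvalues i) : ℝ) : ℂ))
      = fun i => ((Real.sqrt (hA.1.eigenvalues i) : ℝ) : ℂ) from by funext i; simp]

/-- trace of product of two PSD matrices has nonneg real part -/
lemma psd_trace_mul_re_nonneg {A B : Matrix k k ℂ} (hA : A.PosSemidef) (hB : B.PosSemidef) :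
    0 ≤ (Matrix.trace (A * B)).re := by
  have h1 : A * B = hA.sqrt * (hA.sqrt * B) := by rw [← mul_assoc, psd_sqrt_mul_self' hA]
  have h2 : Matrix.trace (A * B) = Matrix.trace (hA.sqrt * B * hA.sqrt) := by
    rw [h1, Matrix.trace_mul_comm]
  rw [h2]
  have : (hA.sqrt * B * hA.sqrt).PosSemidef := by
    have := hB.conjTranspose_mul_mul_same hA.sqrt
    rwa [psd_sqrt_herm' hA] at this
  exact psd_trace_re_nonneg this

lemma ip_self_nonneg (A : Matrix k k ℂ) : 0 ≤ (Matrix.trace (Aᴴ * A)).re :=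
  psd_trace_re_nonneg (Matrix.posSemidef_conjTranspose_mul_self A)

lemma hsNorm_sq (A : Matrix k k ℂ) : hsNorm A ^ 2 = (Matrix.trace (Aᴴ * A)).re :=
  Real.sq_sqrt (ip_self_nonneg A)

lemma ip_comm (A B : Matrix k k ℂ) :
    (Matrix.trace (Bᴴ * A)).re = (Matrix.trace (Aᴴ * B)).re := by
  have : Bᴴ * A = (Aᴴ * B)ᴴ := by simp
  rw [this, Matrix.trace_conjTranspose]
  exact Complex.conj_re _

lemma hsNorm_sub_sq (A B : Matrix k k ℂ) :
    hsNorm (A - B) ^ 2 =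
      hsNorm A ^ 2 + hsNorm B ^ 2 - 2 * (Matrix.trace (Aᴴ * B)).re := by
  rw [hsNorm_sq, hsNorm_sq, hsNorm_sq]
  have : (A - B)ᴴ * (A - B) = Aᴴ * A - Aᴴ * B - Bᴴ * A + Bᴴ * B := by
    rw [conjTranspose_sub]; noncomm_ring
  rw [this]
  simp only [Matrix.trace_add, Matrix.trace_sub, Complex.add_re, Complex.sub_re]
  have := ip_comm A B
  linarith

section eig
variable {A : Matrix k k ℂ} (hA : A.IsHermitian)

lemma star_U_mul_U : (star (hA.eigenvectorUnitary : Matrix k k ℂ)) * hA.eigenvectorUnitary = 1 :=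
  Matrix.mem_unitaryGroup_iff'.mp hA.eigenvectorUnitary.2

lemma trace_eq_sum_eig : Matrix.trace A = ∑ i, (hA.eigenvalues i : ℂ) := by
  conv_lhs => rw [hA.spectral_theorem, Unitary.conjStarAlgAut_apply]
  rw [Matrix.trace_mul_cycle, star_U_mul_U hA, one_mul, Matrix.trace_diagonal]
  rfl

lemma trace_sq_eq_sum_eig : Matrix.trace (Aᴴ * A) = ∑ i, ((hA.eigenvalues i : ℂ)) ^ 2 := by
  rw [hA.eq]
  set U : Matrix k k ℂ := (hA.eigenvectorUnitary : Matrix k k ℂ) with hU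
  set D : Matrix k k ℂ := diagonal (RCLike.ofReal ∘ hA.eigenvalues) with hD
  conv_lhs => rw [hA.spectral_theorem, Unitary.conjStarAlgAut_apply]
  have key : (U * D * star U) * (U * D * star U) = U * D * (D * star U) := by
    calc (U * D * star U) * (U * D * star U)
        = U * D * ((star U * U) * (D * star U)) := by simp only [mul_assoc]
      _ = U * D * (D * star U) := by rw [star_U_mul_U hA, one_mul]
  rw [key, Matrix.trace_mul_cycle, mul_assoc D (star U) U, star_U_mul_U hA, mul_one, hD,
    diagonal_mul_diagonal, Matrix.trace_diagonal]
  simp [sq]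

end eig

lemma trace_mul_diagonal' (M : Matrix k k ℂ) (d : k → ℂ) :
    Matrix.trace (M * diagonal d) = ∑ i, M i i * d i := by
  simp [Matrix.trace, Matrix.diag, Matrix.mul_apply, Matrix.diagonal_apply, mul_ite]

lemma sum_eig_one {ρ : Matrix k k ℂ} (h : ρ.PosSemidef) (ht : Matrix.trace ρ = 1) :
    ∑ i, h.isHermitian.eigenvalues i = 1 := by
  have h2 := trace_eq_sum_eig h.isHermitian
  rw [ht] at h2
  exact_mod_cast h2.symm

lemma ip_self_eq_sum_sq {ρ : Matrix k k ℂ} (h : ρ.PosSemidef) :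
    (Matrix.trace (ρᴴ * ρ)).re = ∑ i, h.isHermitian.eigenvalues i ^ 2 := by
  rw [trace_sq_eq_sum_eig h.isHermitian, Complex.re_sum]
  congr 1; ext i
  rw [← Complex.ofReal_pow, Complex.ofReal_re]

lemma ip_self_le_one {ρ : Matrix k k ℂ} (h : ρ.PosSemidef) (ht : Matrix.trace ρ = 1) :
    (Matrix.trace (ρᴴ * ρ)).re ≤ 1 := by
  rw [ip_self_eq_sum_sq h]
  calc ∑ i, h.isHermitian.eigenvalues i ^ 2
      ≤ (∑ i, h.isHermitian.eigenvalues i) ^ 2 :=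
        Finset.sum_sq_le_sq_sum_of_nonneg fun i _ => h.eigenvalues_nonneg i
    _ = 1 := by rw [sum_eig_one h ht]; norm_num

lemma conj_mul_conj {U : Matrix k k ℂ} (hU1 : star U * U = 1) (X Y : Matrix k k ℂ) :
    (U * X * star U) * (U * Y * star U) = U * (X * Y) * star U := by
  calc (U * X * star U) * (U * Y * star U)
      = U * X * ((star U * U) * (Y * star U)) := by simp only [mul_assoc]
    _ = U * (X * Y) * star U := by rw [hU1, one_mul]; simp only [mul_assoc]

lemma trace_conj {U : Matrix k k ℂ} (hU1 : star U * U = 1) (X : Matrix k k ℂ) :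
    Matrix.trace (U * X * star U) = Matrix.trace X := by
  rw [Matrix.trace_mul_cycle, hU1, one_mul]

lemma U_mul_star_U {A : Matrix k k ℂ} (hA : A.IsHermitian) :
    (hA.eigenvectorUnitary : Matrix k k ℂ) * star (hA.eigenvectorUnitary : Matrix k k ℂ) = 1 :=
  Matrix.mem_unitaryGroup_iff.mp hA.eigenvectorUnitary.2

lemma exists_min_eig [Nonempty k] {ρ : Matrix k k ℂ} (hh : ρ.IsHermitian) :
    ∃ i₀, hh.eigenvalues i₀ = (⨅ i, hh.eigenvalues i) ∧
      ∀ i, hh.eigenvalues i₀ ≤ hh.eigenvalues i := by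
  obtain ⟨i₀, hi₀⟩ := Finite.exists_min hh.eigenvalues
  exact ⟨i₀, le_antisymm (le_ciInf hi₀) (ciInf_le (Set.finite_range _).bddBelow i₀), hi₀⟩

lemma iInf_le_eig [Nonempty k] {ρ : Matrix k k ℂ} (hh : ρ.IsHermitian) (i : k) :
    (⨅ j, hh.eigenvalues j) ≤ hh.eigenvalues i :=
  ciInf_le (Set.finite_range _).bddBelow i

lemma trace_mul_ge [Nonempty k] {ρ₂ ρ₁ : Matrix k k ℂ} (h2 : ρ₂.PosSemidef)
    (h1 : ρ₁.PosSemidef) (ht1 : Matrix.trace ρ₁ = 1) :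
    (⨅ i, h2.isHermitian.eigenvalues i) ≤ (Matrix.trace (ρ₂ᴴ * ρ₁)).re := by
  set hA := h2.isHermitian with hhA
  set U : Matrix k k ℂ := (hA.eigenvectorUnitary : Matrix k k ℂ) with hUdef
  have hU1 : star U * U = 1 := star_U_mul_U hA
  have hU2 : U * star U = 1 := U_mul_star_U hA
  set D : Matrix k k ℂ := diagonal (RCLike.ofReal ∘ hA.eigenvalues) with hD
  set σ : Matrix k k ℂ := star U * ρ₁ * U with hσ
  have hσpsd : σ.PosSemidef := by
    rw [hσ, Matrix.star_eq_conjTranspose]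
    exact h1.conjTranspose_mul_mul_same U
  have htrσ : Matrix.trace σ = 1 := by
    rw [hσ, Matrix.trace_mul_cycle, hU2, one_mul, ht1]
  have hexp : Matrix.trace (ρ₂ᴴ * ρ₁) = Matrix.trace (σ * D) := by
    conv_lhs => rw [hA.eq, hA.spectral_theorem, Unitary.conjStarAlgAut_apply]
    rw [mul_assoc (U * D) (star U) ρ₁, Matrix.trace_mul_comm, hσ]
    congr 1
    simp only [mul_assoc]
  rw [hexp, trace_mul_diagonal', Complex.re_sum]
  have hre : ∀ i, (σ i i * (RCLike.ofReal ∘ hA.eigenvalues) i).re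
      = (σ i i).re * hA.eigenvalues i := by
    intro i
    simp [Function.comp_apply, Complex.mul_re]
  calc (⨅ i, hA.eigenvalues i)
      = ∑ i, (σ i i).re * (⨅ j, hA.eigenvalues j) := by
        rw [← Finset.sum_mul]
        have hs : ∑ i, (σ i i).re = 1 := by
          have := congrArg Complex.re htrσ
          rwa [Matrix.trace, Complex.re_sum] at this
        rw [hs, one_mul]
    _ ≤ ∑ i, (σ i i).re * hA.eigenvalues i := by
        refine Finset.sum_le_sum fun i _ => ?_
        exact mul_le_mul_of_nonneg_left (iInf_le_eig hA i) (psd_diag_re_nonneg hσpsd i)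
    _ = ∑ i, (σ i i * (RCLike.ofReal ∘ hA.eigenvalues) i).re := by simp_rw [hre]

lemma attain {ρ₂ : Matrix k k ℂ} (h2 : ρ₂.PosSemidef) (i₀ : k) :
    ∃ ρ₁ : Matrix k k ℂ, ρ₁.PosSemidef ∧ Matrix.trace ρ₁ = 1 ∧
      (Matrix.trace (ρ₁ᴴ * ρ₁)).re = 1 ∧
      (Matrix.trace (ρ₂ᴴ * ρ₁)).re = h2.isHermitian.eigenvalues i₀ := by
  set hA := h2.isHermitian with hhA
  set U : Matrix k k ℂ := (hA.eigenvectorUnitary : Matrix k k ℂ) with hUdef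
  have hU1 : star U * U = 1 := star_U_mul_U hA
  set E : Matrix k k ℂ := diagonal (fun j => if j = i₀ then 1 else 0) with hE
  have hEpsd : E.PosSemidef := by
    refine posSemidef_diagonal_iff.mpr fun i => ?_
    split_ifs <;> simp
  have hψpsd : (U * E * star U).PosSemidef := by
    simpa [Matrix.star_eq_conjTranspose] using hEpsd.mul_mul_conjTranspose_same U
  have hEE : E * E = E := by
    have hf : (fun i => (if i = i₀ then (1:ℂ) else 0) * if i = i₀ then 1 else 0)
        = fun j => if j = i₀ then (1:ℂ) else 0 := by
      funext i; split_ifs <;> simp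
    rw [hE, diagonal_mul_diagonal, hf]
  have htr : Matrix.trace (U * E * star U) = 1 := by
    rw [trace_conj hU1, hE, Matrix.trace_diagonal]
    simp
  refine ⟨U * E * star U, hψpsd, htr, ?_, ?_⟩
  · rw [hψpsd.isHermitian.eq, conj_mul_conj hU1, hEE, htr]
    norm_num
  · conv_lhs => rw [hA.eq, hA.spectral_theorem, Unitary.conjStarAlgAut_apply]
    rw [conj_mul_conj hU1, trace_conj hU1, diagonal_mul_diagonal, Matrix.trace_diagonal]
    simp

section mm
variable [Nonempty k]

lemma rhoM_eq : ((Fintype.card k : ℂ))⁻¹ • (1 : Matrix k k ℂ)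
    = diagonal (fun _ => (Fintype.card k : ℂ)⁻¹) := Matrix.smul_one_eq_diagonal _

lemma card_ne_zero' : ((Fintype.card k : ℝ)) ≠ 0 := by
  simp [Fintype.card_ne_zero]

lemma rhoM_density : IsDensity (((Fintype.card k : ℂ))⁻¹ • (1 : Matrix k k ℂ)) := by
  constructor
  · rw [rhoM_eq]
    refine posSemidef_diagonal_iff.mpr fun i => ?_
    rw [show ((Fintype.card k : ℂ))⁻¹ = (((Fintype.card k : ℝ)⁻¹ : ℝ) : ℂ) by push_cast; ring]
    exact Complex.zero_le_real.mpr (by positivity)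
  · rw [Matrix.trace_smul, Matrix.trace_one, smul_eq_mul]
    exact inv_mul_cancel₀ (by exact_mod_cast (card_ne_zero' (k := k)))

lemma ip_rhoM_self :
    (Matrix.trace ((((Fintype.card k : ℂ))⁻¹ • (1 : Matrix k k ℂ))ᴴ
      * (((Fintype.card k : ℂ))⁻¹ • (1 : Matrix k k ℂ)))).re = (Fintype.card k : ℝ)⁻¹ := by
  simp only [Matrix.conjTranspose_smul, Matrix.conjTranspose_one, Matrix.smul_mul,
    Matrix.mul_smul, Matrix.one_mul, Matrix.trace_smul, Matrix.trace_one, smul_eq_mul]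
  rw [show ((Fintype.card k : ℂ))⁻¹ = (((Fintype.card k : ℝ)⁻¹ : ℝ) : ℂ) by push_cast; ring]
  simp only [Complex.star_def, Complex.conj_ofReal]
  rw [← Complex.ofReal_natCast, ← Complex.ofReal_mul, ← Complex.ofReal_mul, Complex.ofReal_re,
    inv_mul_cancel₀ (card_ne_zero' (k := k)), mul_one]

lemma ip_rhoM_other {ρ₁ : Matrix k k ℂ} (ht : Matrix.trace ρ₁ = 1) :
    (Matrix.trace ((((Fintype.card k : ℂ))⁻¹ • (1 : Matrix k k ℂ))ᴴ * ρ₁)).re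
      = (Fintype.card k : ℝ)⁻¹ := by
  simp only [Matrix.conjTranspose_smul, Matrix.conjTranspose_one, Matrix.smul_mul,
    Matrix.one_mul, Matrix.trace_smul, smul_eq_mul, ht, mul_one]
  rw [show ((Fintype.card k : ℂ))⁻¹ = (((Fintype.card k : ℝ)⁻¹ : ℝ) : ℂ) by push_cast; ring]
  simp [Complex.star_def, Complex.conj_ofReal]

end mm

lemma partA [Nonempty k] (ρ₂ : Matrix k k ℂ) (h : IsDensity ρ₂) :
    IsGreatest {x : ℝ | ∃ ρ₁ : Matrix k k ℂ, IsDensity ρ₁ ∧ x = hsNorm (ρ₂ - ρ₁) ^ 2}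
      (hsNorm ρ₂ ^ 2 + 1 - 2 * ⨅ i, (Matrix.PosSemidef.isHermitian h.1).eigenvalues i) := by
  obtain ⟨i₀, hmin, -⟩ := exists_min_eig (Matrix.PosSemidef.isHermitian h.1)
  constructor
  · obtain ⟨ρ₁, hp, ht, hsq, hip⟩ := attain h.1 i₀
    refine ⟨ρ₁, ⟨hp, ht⟩, ?_⟩
    rw [hsNorm_sub_sq, hsNorm_sq ρ₁, hsq, hip, hmin]
  · rintro x ⟨ρ₁, ⟨hp, ht⟩, rfl⟩
    rw [hsNorm_sub_sq, hsNorm_sq ρ₁]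
    have h1 := ip_self_le_one hp ht
    have h2 := trace_mul_ge h.1 hp ht
    linarith

lemma partC [Nonempty k] : IsGreatest {x : ℝ | ∃ ρ₁ : Matrix k k ℂ, IsDensity ρ₁ ∧
      x = hsNorm (((Fintype.card k : ℂ))⁻¹ • (1 : Matrix k k ℂ) - ρ₁) ^ 2}
    (((Fintype.card k : ℝ) - 1) / (Fintype.card k)) := by
  have hn : ((Fintype.card k : ℝ)) ≠ 0 := card_ne_zero'
  constructor
  · obtain ⟨ρ₁, hp, ht, hsq, -⟩ := attain (rhoM_density (k := k)).1 (Classical.arbitrary k)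
    refine ⟨ρ₁, ⟨hp, ht⟩, ?_⟩
    rw [hsNorm_sub_sq, hsNorm_sq ρ₁, hsq, hsNorm_sq, ip_rhoM_self, ip_rhoM_other ht]
    field_simp
    ring
  · rintro x ⟨ρ₁, ⟨hp, ht⟩, rfl⟩
    rw [hsNorm_sub_sq, hsNorm_sq ρ₁, hsNorm_sq, ip_rhoM_self, ip_rhoM_other ht]
    have h1 := ip_self_le_one hp ht
    have heq : ((Fintype.card k : ℝ) - 1) / (Fintype.card k) = 1 - (Fintype.card k : ℝ)⁻¹ := by
      field_simp
    linarith

lemma mainResult [Nonempty k] :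
    (∀ (ρ₂ : Matrix k k ℂ) (h : IsDensity ρ₂),
      IsGreatest {x : ℝ | ∃ ρ₁ : Matrix k k ℂ, IsDensity ρ₁ ∧ x = hsNorm (ρ₂ - ρ₁) ^ 2}
        (hsNorm ρ₂ ^ 2 + 1 - 2 * ⨅ i, (Matrix.PosSemidef.isHermitian h.1).eigenvalues i)) ∧
    IsLeast {y : ℝ | ∃ ρ₂ : Matrix k k ℂ, IsDensity ρ₂ ∧
        y = sSup {x : ℝ | ∃ ρ₁ : Matrix k k ℂ, IsDensity ρ₁ ∧ x = hsNorm (ρ₂ - ρ₁) ^ 2}}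
      (((Fintype.card k : ℝ) - 1) / (Fintype.card k)) ∧
    sSup {x : ℝ | ∃ ρ₁ : Matrix k k ℂ, IsDensity ρ₁ ∧
        x = hsNorm (((Fintype.card k : ℂ))⁻¹ • (1 : Matrix k k ℂ) - ρ₁) ^ 2}
      = ((Fintype.card k : ℝ) - 1) / (Fintype.card k) := by
  refine ⟨partA, ⟨⟨((Fintype.card k : ℂ))⁻¹ • (1 : Matrix k k ℂ), rhoM_density,
      (partC.csSup_eq).symm⟩, ?_⟩, partC.csSup_eq⟩
  rintro y ⟨ρ₂, hd, rfl⟩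
  rw [(partA ρ₂ hd).csSup_eq]
  set ζ := (Matrix.PosSemidef.isHermitian hd.1).eigenvalues with hζ
  have hsum : ∑ i, ζ i = 1 := sum_eig_one hd.1 hd.2
  have hipsq : hsNorm ρ₂ ^ 2 = ∑ i, ζ i ^ 2 := by
    rw [hsNorm_sq]; exact ip_self_eq_sum_sq hd.1
  have h1 : (1:ℝ) ≤ (Fintype.card k : ℝ) * ∑ i, ζ i ^ 2 := by
    have := sq_sum_le_card_mul_sum_sq (s := Finset.univ) (f := ζ)
    rw [hsum] at this
    simpa using this
  have h2 : (Fintype.card k : ℝ) * (⨅ i, ζ i) ≤ 1 := by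
    have hb := Finset.card_nsmul_le_sum Finset.univ ζ (⨅ i, ζ i)
      (fun i _ => iInf_le_eig (Matrix.PosSemidef.isHermitian hd.1) i)
    rw [hsum] at hb
    simpa [nsmul_eq_mul] using hb
  have hn0 : (0:ℝ) < (Fintype.card k : ℝ) := by
    have := Fintype.card_pos (α := k); exact_mod_cast this
  rw [hipsq, div_le_iff₀ hn0]
  nlinarith [h1, h2]

end Helpers

/-- for every density matrix `ρ₂`, the maximum of `‖ρ₂ − ρ₁‖²_HS` over density
matrices `ρ₁` equals `‖ρ₂‖²_HS + 1 − 2ζ_min(ρ₂)`; the minimum over `ρ₂` of this maximum is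
`(n_s − 1)/n_s`, attained at the maximally mixed state `I/n_s`. -/
theorem stmt14 {k : Type*} [Fintype k] [DecidableEq k] [Nonempty k] :
    (∀ (ρ₂ : Matrix k k ℂ) (h : IsDensity ρ₂),
      IsGreatest {x : ℝ | ∃ ρ₁ : Matrix k k ℂ, IsDensity ρ₁ ∧ x = hsNorm (ρ₂ - ρ₁) ^ 2}
        (hsNorm ρ₂ ^ 2 + 1 - 2 * ⨅ i, (Matrix.PosSemidef.isHermitian h.1).eigenvalues i)) ∧
    IsLeast {y : ℝ | ∃ ρ₂ : Matrix k k ℂ, IsDensity ρ₂ ∧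
        y = sSup {x : ℝ | ∃ ρ₁ : Matrix k k ℂ, IsDensity ρ₁ ∧ x = hsNorm (ρ₂ - ρ₁) ^ 2}}
      (((Fintype.card k : ℝ) - 1) / (Fintype.card k)) ∧
    sSup {x : ℝ | ∃ ρ₁ : Matrix k k ℂ, IsDensity ρ₁ ∧
        x = hsNorm (((Fintype.card k : ℂ))⁻¹ • (1 : Matrix k k ℂ) - ρ₁) ^ 2}
      = ((Fintype.card k : ℝ) - 1) / (Fintype.card k) :=
  mainResult
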